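/- (a) A set K ⊆ 𝒫(T) is a coherent and conjunctive SDS if and only if K = sds(D) for some coherent SDT D. (b) If cl is finitary, then K ⊆ 𝒫(T) is a finitely coherent and conjunctive SDS if and only if K = sds(D) for some coherent SDT D. In both cases the representing D is necessarily sdt(K). -/
import Mathlib


universe u

variable {T : Type u}

/-- `cl` is a closure operator on subsets of `T`. -/
def IsClosure (cl : Set T → Set T) : Prop :=
  (∀ A : Set T, A ⊆ cl A) ∧
  (∀ A B : Set T, A ⊆ B → cl A ⊆ cl B) ∧
  (∀ A : Set T, cl (cl A) = cl A)

/-- `cl` is finitary: the closure of a set is the union of the closures of its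
finite subsets. -/
def IsFinitary (cl : Set T → Set T) : Prop :=
  ∀ A : Set T, cl A = ⋃ F ∈ {F : Set T | F.Finite ∧ F ⊆ A}, cl F

/-- A coherent set of desirable things (SDT): closed and avoiding the forbidden
things `Tneg`. -/
def CohSDT (cl : Set T → Set T) (Tneg : Set T) (D : Set T) : Prop :=
  cl D = D ∧ D ∩ Tneg = ∅

/-- Selection maps of a collection `W` of sets of things: maps choosing an
element of each member of `W`. -/
def Sel (W : Set (Set T)) : Type u :=
  {σ : Set T → T // ∀ A ∈ W, σ A ∈ A}

/-- A coherent set of desirable sets of things (SDS): axioms K1–K5. -/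
def CohSDS (cl : Set T → Set T) (Tneg : Set T) (K : Set (Set T)) : Prop :=
  (∅ : Set T) ∉ K ∧
  (∀ A₁ ∈ K, ∀ A₂ : Set T, A₁ ⊆ A₂ → A₂ ∈ K) ∧
  (∀ A ∈ K, A \ Tneg ∈ K) ∧
  (∀ t ∈ cl (∅ : Set T), ({t} : Set T) ∈ K) ∧
  (∀ W ⊆ K, W.Nonempty →
    ∀ f : Sel W → T, (∀ σ : Sel W, f σ ∈ cl (σ.1 '' W)) → Set.range f ∈ K)

/-- A finitely coherent SDS: axioms K1–K4 together with K5 restricted to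
nonempty finite subcollections. -/
def FinCohSDS (cl : Set T → Set T) (Tneg : Set T) (K : Set (Set T)) : Prop :=
  (∅ : Set T) ∉ K ∧
  (∀ A₁ ∈ K, ∀ A₂ : Set T, A₁ ⊆ A₂ → A₂ ∈ K) ∧
  (∀ A ∈ K, A \ Tneg ∈ K) ∧
  (∀ t ∈ cl (∅ : Set T), ({t} : Set T) ∈ K) ∧
  (∀ W ⊆ K, W.Finite → W.Nonempty →
    ∀ f : Sel W → T, (∀ σ : Sel W, f σ ∈ cl (σ.1 '' W)) → Set.range f ∈ K)

/-- A finitely coherent set of desirable finite sets of things (SDFS):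
axioms F1–F5. -/
def FinCohSDFS (cl : Set T → Set T) (Tneg : Set T) (K : Set (Set T)) : Prop :=
  (∀ F ∈ K, F.Finite) ∧
  (∅ : Set T) ∉ K ∧
  (∀ F₁ ∈ K, ∀ F₂ : Set T, F₂.Finite → F₁ ⊆ F₂ → F₂ ∈ K) ∧
  (∀ F ∈ K, F \ Tneg ∈ K) ∧
  (∀ t ∈ cl (∅ : Set T), ({t} : Set T) ∈ K) ∧
  (∀ W ⊆ K, W.Finite → W.Nonempty →
    ∀ f : Sel W → T, (∀ σ : Sel W, f σ ∈ cl (σ.1 '' W)) → Set.range f ∈ K)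

/-- The set of things whose singletons belong to `K`. -/
def sdt (K : Set (Set T)) : Set T := {t | ({t} : Set T) ∈ K}

/-- The SDS of all sets of things meeting `D`. -/
def sds (D : Set T) : Set (Set T) := {A | (A ∩ D).Nonempty}

/-- The SDFS of all finite sets of things meeting `D`. -/
def sdfs (D : Set T) : Set (Set T) := {F | F.Finite ∧ (F ∩ D).Nonempty}

/-- The event `𝒟_A` of all coherent SDTs meeting `A`. -/
def evA (cl : Set T → Set T) (Tneg : Set T) (A : Set T) : Set (Set T) :=
  {D | CohSDT cl Tneg D ∧ (A ∩ D).Nonempty}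

/-- The event `E(W)` of all coherent SDTs meeting every member of `W`
(with `E(∅)` equal to the set of all coherent SDTs). -/
def ev (cl : Set T → Set T) (Tneg : Set T) (W : Set (Set T)) : Set (Set T) :=
  {D | CohSDT cl Tneg D ∧ ∀ A ∈ W, (A ∩ D).Nonempty}

/-- An SDS is conjunctive if every desirable set contains a desirable
singleton. -/
def Conjunctive (K : Set (Set T)) : Prop :=
  ∀ A ∈ K, ∃ t ∈ A, ({t} : Set T) ∈ K

/-- Completeness of an SDS. -/
def CompleteSDS (K : Set (Set T)) : Prop :=
  ∀ A₁ A₂ : Set T, A₁ ∪ A₂ ∈ K → A₁ ∈ K ∨ A₂ ∈ K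

/-- The finitary part `K^f` of an SDS. -/
def finPart (K : Set (Set T)) : Set (Set T) :=
  {A | ∃ B ∈ K, B.Finite ∧ B ⊆ A}

/-- An SDS is finitary if every desirable set has a finite desirable subset. -/
def FinitarySDS (K : Set (Set T)) : Prop :=
  ∀ A ∈ K, ∃ B, B.Finite ∧ B ⊆ A ∧ B ∈ K

/-- The lattice of events `E`. -/
def Ecal (cl : Set T → Set T) (Tneg : Set T) : Set (Set (Set T)) :=
  {E | ∃ W : Set (Set T), E = ev cl Tneg W}

/-- The lattice of finitary events `E_fin`. -/
def Efin (cl : Set T → Set T) (Tneg : Set T) : Set (Set (Set T)) :=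
  {E | ∃ W : Set (Set T), W.Finite ∧ E = ev cl Tneg W}

/-- A filter on a lattice of events `L` ordered by inclusion. -/
def IsFilterOn (L F : Set (Set (Set T))) : Prop :=
  F ⊆ L ∧ F.Nonempty ∧
  (∀ E₁ ∈ F, ∀ E₂ ∈ L, E₁ ⊆ E₂ → E₂ ∈ F) ∧
  (∀ E₁ ∈ F, ∀ E₂ ∈ F, E₁ ∩ E₂ ∈ F)

/-- A proper filter on `L`. -/
def IsProperFilterOn (L F : Set (Set (Set T))) : Prop :=
  IsFilterOn L F ∧ F ≠ L

/-- A prime filter on `L`. -/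
def IsPrimeFilterOn (L F : Set (Set (Set T))) : Prop :=
  IsProperFilterOn L F ∧
  ∀ E₁ ∈ L, ∀ E₂ ∈ L, E₁ ∪ E₂ ∈ F → E₁ ∈ F ∨ E₂ ∈ F

/-- A proper principal filter on `L`: the upset of some nonempty `E₀ ∈ L`. -/
def IsProperPrincipalFilterOn (L F : Set (Set (Set T))) : Prop :=
  ∃ E₀ ∈ L, E₀ ≠ (∅ : Set (Set T)) ∧ F = {E' | E' ∈ L ∧ E₀ ⊆ E'}

/-- The map `f̂` sending an SDS to the collection of events of its finite
subcollections. -/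
def fhat (cl : Set T → Set T) (Tneg : Set T) (K : Set (Set T)) :
    Set (Set (Set T)) :=
  {E | ∃ W : Set (Set T), W ⊆ K ∧ W.Finite ∧ E = ev cl Tneg W}

/-- The map `f` sending an SDS to the collection of events of all of its
subcollections. -/
def fprin (cl : Set T → Set T) (Tneg : Set T) (K : Set (Set T)) :
    Set (Set (Set T)) :=
  {E | ∃ W : Set (Set T), W ⊆ K ∧ E = ev cl Tneg W}

/-- The map `d` sending a collection of events to the SDS it determines. -/
def dmap (cl : Set T → Set T) (Tneg : Set T) (F : Set (Set (Set T))) :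
    Set (Set T) :=
  {A : Set T | evA cl Tneg A ∈ F}

/-- `K` is finitely consistent: it is included in some finitely coherent SDS. -/
def FinConsistent (cl : Set T → Set T) (Tneg : Set T) (K : Set (Set T)) : Prop :=
  ∃ K' : Set (Set T), FinCohSDS cl Tneg K' ∧ K ⊆ K'

/-- `K` is consistent: it is included in some coherent SDS. -/
def Consistent (cl : Set T → Set T) (Tneg : Set T) (K : Set (Set T)) : Prop :=
  ∃ K' : Set (Set T), CohSDS cl Tneg K' ∧ K ⊆ K'

/-- The finitary closure operator on SDSes (with value `𝒫(T)` when `K` is not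
finitely consistent, via the empty-intersection convention). -/
def clFin (cl : Set T → Set T) (Tneg : Set T) (K : Set (Set T)) : Set (Set T) :=
  ⋂₀ {K' : Set (Set T) | FinCohSDS cl Tneg K' ∧ K ⊆ K'}

/-- The closure operator on SDSes (with value `𝒫(T)` when `K` is not
consistent, via the empty-intersection convention). -/
def clSDS (cl : Set T → Set T) (Tneg : Set T) (K : Set (Set T)) : Set (Set T) :=
  ⋂₀ {K' : Set (Set T) | CohSDS cl Tneg K' ∧ K ⊆ K'}

section Aux

attribute [local instance] Classical.propDecidable
set_option linter.unusedSectionVars false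

variable [Nonempty T]

lemma sel_nonempty {W : Set (Set T)} (h : ∀ A ∈ W, A.Nonempty) :
    Nonempty (Sel W) :=
  ⟨⟨fun A => Classical.epsilon (· ∈ A),
    fun A hA => Classical.epsilon_spec (h A hA)⟩⟩

lemma sel_image_singletons {F : Set T}
    (σ : Sel ((fun d => ({d} : Set T)) '' F)) :
    σ.1 '' ((fun d => ({d} : Set T)) '' F) = F := by
  ext x
  constructor
  · rintro ⟨A, ⟨d, hd, rfl⟩, rfl⟩
    have h := σ.2 {d} ⟨d, hd, rfl⟩
    rw [Set.mem_singleton_iff] at h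
    rwa [h]
  · intro hx
    refine ⟨{x}, ⟨x, hx, rfl⟩, ?_⟩
    have h := σ.2 {x} ⟨x, hx, rfl⟩
    rwa [Set.mem_singleton_iff] at h

lemma key_step {cl : Set T → Set T} {K : Set (Set T)} {F : Set T}
    {t : T} (ht : t ∈ cl F)
    (hK5 : ∀ f : Sel ((fun d => ({d} : Set T)) '' F) → T,
      (∀ σ : Sel ((fun d => ({d} : Set T)) '' F),
        f σ ∈ cl (σ.1 '' ((fun d => ({d} : Set T)) '' F))) →
      Set.range f ∈ K) :
    ({t} : Set T) ∈ K := by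
  haveI : Nonempty (Sel ((fun d => ({d} : Set T)) '' F)) :=
    sel_nonempty (by rintro A ⟨d, hd, rfl⟩; exact ⟨d, rfl⟩)
  have h := hK5 (fun _ => t)
    (fun σ => by rw [sel_image_singletons σ]; exact ht)
  rwa [Set.range_const] at h

lemma sds_K5 {cl : Set T → Set T} (hcl : IsClosure cl) {D : Set T}
    (hD : cl D = D) :
    ∀ W ⊆ sds D, W.Nonempty → ∀ f : Sel W → T,
      (∀ σ : Sel W, f σ ∈ cl (σ.1 '' W)) → Set.range f ∈ sds D := by
  intro W hW _ f hf
  have hsel : ∀ A ∈ W, (fun A => Classical.epsilon (· ∈ A ∩ D)) A ∈ A := by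
    intro A hA
    exact (Classical.epsilon_spec (p := (· ∈ A ∩ D)) (hW hA)).1
  let σ : Sel W := ⟨_, hsel⟩
  have himg : σ.1 '' W ⊆ D := by
    rintro x ⟨A, hA, rfl⟩
    exact (Classical.epsilon_spec (p := (· ∈ A ∩ D)) (hW hA)).2
  have hfσ : f σ ∈ D := by
    have h2 : cl (σ.1 '' W) ⊆ D := hD ▸ hcl.2.1 _ _ himg
    exact h2 (hf σ)
  exact ⟨f σ, ⟨σ, rfl⟩, hfσ⟩

lemma sds_backward {cl : Set T → Set T} {Tneg : Set T}
    (hcl : IsClosure cl) {D : Set T} (hD : CohSDT cl Tneg D) :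
    CohSDS cl Tneg (sds D) ∧ FinCohSDS cl Tneg (sds D) ∧ Conjunctive (sds D) := by
  obtain ⟨hclD, hneg⟩ := hD
  have K1 : (∅ : Set T) ∉ sds D := by
    rintro ⟨t, ht, -⟩; exact ht
  have K2 : ∀ A₁ ∈ sds D, ∀ A₂ : Set T, A₁ ⊆ A₂ → A₂ ∈ sds D := by
    rintro A₁ ⟨t, ht, htD⟩ A₂ h; exact ⟨t, h ht, htD⟩
  have K3 : ∀ A ∈ sds D, A \ Tneg ∈ sds D := by
    rintro A ⟨t, ht, htD⟩
    refine ⟨t, ⟨ht, fun htn => ?_⟩, htD⟩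
    have h : t ∈ D ∩ Tneg := ⟨htD, htn⟩
    rw [hneg] at h; exact h
  have K4 : ∀ t ∈ cl (∅ : Set T), ({t} : Set T) ∈ sds D := by
    intro t ht
    have h : cl (∅ : Set T) ⊆ D := hclD ▸ hcl.2.1 _ _ (Set.empty_subset D)
    exact ⟨t, rfl, h ht⟩
  have K5 := sds_K5 hcl hclD
  refine ⟨⟨K1, K2, K3, K4, K5⟩, ⟨K1, K2, K3, K4, fun W hW _ => K5 W hW⟩, ?_⟩
  rintro A ⟨t, ht, htD⟩
  exact ⟨t, ht, ⟨t, rfl, htD⟩⟩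

lemma forward_aux {cl : Set T → Set T} {Tneg : Set T}
    (hcl : IsClosure cl) {K : Set (Set T)}
    (hK1 : (∅ : Set T) ∉ K)
    (hK2 : ∀ A₁ ∈ K, ∀ A₂ : Set T, A₁ ⊆ A₂ → A₂ ∈ K)
    (hK3 : ∀ A ∈ K, A \ Tneg ∈ K)
    (conj : Conjunctive K)
    (hcls : ∀ t ∈ cl (sdt K), ({t} : Set T) ∈ K) :
    CohSDT cl Tneg (sdt K) ∧ K = sds (sdt K) := by
  constructor
  · constructor
    · exact Set.Subset.antisymm (fun t ht => hcls t ht) (hcl.1 _)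
    · ext t
      simp only [Set.mem_inter_iff, Set.mem_empty_iff_false, iff_false, not_and]
      intro hts htn
      have h := hK3 {t} hts
      have he : ({t} : Set T) \ Tneg = ∅ := by
        ext x
        simp only [Set.mem_diff, Set.mem_singleton_iff, Set.mem_empty_iff_false,
          iff_false, not_and, not_not]
        rintro rfl; exact htn
      rw [he] at h
      exact hK1 h
  · ext A
    constructor
    · intro hA
      obtain ⟨t, htA, hts⟩ := conj A hA
      exact ⟨t, htA, hts⟩
    · rintro ⟨t, htA, hts⟩
      exact hK2 {t} hts A (Set.singleton_subset_iff.mpr htA)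

end Aux

/-- Characterisation of the conjunctive (finitely) coherent SDSes. -/
theorem conjunctive_coherent_characterisation (T : Type u) [Nonempty T]
    (cl : Set T → Set T) (Tneg : Set T)
    (hcl : IsClosure cl) (hsan : cl (∅ : Set T) ∩ Tneg = ∅)
    (K : Set (Set T)) :
    ((CohSDS cl Tneg K ∧ Conjunctive K) ↔
      ∃ D : Set T, CohSDT cl Tneg D ∧ K = sds D) ∧
    (IsFinitary cl →
      ((FinCohSDS cl Tneg K ∧ Conjunctive K) ↔
        ∃ D : Set T, CohSDT cl Tneg D ∧ K = sds D)) ∧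
    (∀ D : Set T, K = sds D → D = sdt K) := by
  refine ⟨?_, ?_, ?_⟩
  · constructor
    · rintro ⟨⟨hK1, hK2, hK3, hK4, hK5⟩, conj⟩
      have hcls : ∀ t ∈ cl (sdt K), ({t} : Set T) ∈ K := by
        intro t ht
        rcases Set.eq_empty_or_nonempty (sdt K) with he | hne
        · rw [he] at ht; exact hK4 t ht
        · refine key_step ht (fun f hf => ?_)
          refine hK5 _ ?_ (hne.image _) f hf
          rintro A ⟨d, hd, rfl⟩; exact hd
      obtain ⟨h1, h2⟩ := forward_aux hcl hK1 hK2 hK3 conj hcls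
      exact ⟨sdt K, h1, h2⟩
    · rintro ⟨D, hD, rfl⟩
      obtain ⟨h1, _, h3⟩ := sds_backward hcl hD
      exact ⟨h1, h3⟩
  · intro hfin
    constructor
    · rintro ⟨⟨hK1, hK2, hK3, hK4, hK5⟩, conj⟩
      have hcls : ∀ t ∈ cl (sdt K), ({t} : Set T) ∈ K := by
        intro t ht
        rw [hfin (sdt K)] at ht
        rw [Set.mem_iUnion₂] at ht
        obtain ⟨F, ⟨hFfin, hFsub⟩, htF⟩ := ht
        rcases Set.eq_empty_or_nonempty F with he | hne
        · rw [he] at htF; exact hK4 t htF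
        · refine key_step htF (fun f hf => ?_)
          refine hK5 _ ?_ (hFfin.image _) (hne.image _) f hf
          rintro A ⟨d, hd, rfl⟩; exact hFsub hd
      obtain ⟨h1, h2⟩ := forward_aux hcl hK1 hK2 hK3 conj hcls
      exact ⟨sdt K, h1, h2⟩
    · rintro ⟨D, hD, rfl⟩
      obtain ⟨_, h2, h3⟩ := sds_backward hcl hD
      exact ⟨h2, h3⟩
  · rintro D rfl
    ext t
    simp only [sdt, sds, Set.mem_setOf_eq, Set.singleton_inter_nonempty]
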